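/- arXiv:1511.03225 — 2 statements merged into one kernel-verified Lean document; each statement's English description precedes it below -/
import Mathlib

section
/- Let X be uniformly distributed on the closed ball of radius r > 0 centered at the origin in ℝᵈ, and 0 ≤ ρ ≤ r/√2. Then (v_{d-1}/v_d) · 2^{-(d-1)/2} · (ρ/r) ≤ P(X₁ ∈ [0,ρ]) ≤ (v_{d-1}/v_d) · (ρ/r), where v_k is the volume of the unit ball in ℝᵏ. -/
open MeasureTheory Metric

set_option maxHeartbeats 1000000 in
lemma slice_volume (n : ℕ) (r ρ : ℝ) (hr : 0 < r) (hρ0 : 0 ≤ ρ) (hρr : ρ ≤ r) :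
    volume ({x : EuclideanSpace ℝ (Fin (n+1)) | x 0 ∈ Set.Icc 0 ρ} ∩ closedBall 0 r)
      = ∫⁻ t in Set.Icc 0 ρ,
          volume (ball (0:EuclideanSpace ℝ (Fin n)) 1)
            * ENNReal.ofReal (Real.sqrt (r^2 - t^2) ^ n) := by
  classical
  set T : Set (ℝ × (Fin n → ℝ)) :=
    {p | p.1 ∈ Set.Icc 0 ρ ∧ p.1^2 + ∑ i, (p.2 i)^2 ≤ r^2} with hT
  have hc : Continuous (fun p : ℝ × (Fin n → ℝ) => p.1^2 + ∑ i, (p.2 i)^2) := by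
    exact (continuous_fst.pow 2).add
      (continuous_finset_sum _ fun i _ => ((continuous_apply i).comp continuous_snd).pow 2)
  have hTm : MeasurableSet T := by
    exact (measurable_fst measurableSet_Icc).inter
      (measurableSet_le hc.measurable measurable_const)
  have hmp : MeasurePreserving
      ((MeasurableEquiv.piFinSuccAbove (fun _ : Fin (n+1) => ℝ) 0) ∘
        ((MeasurableEquiv.toLp 2 (Fin (n+1) → ℝ)).symm)) volume volume :=
    (volume_preserving_piFinSuccAbove (fun _ : Fin (n+1) => ℝ) 0).comp
      (EuclideanSpace.volume_preserving_symm_measurableEquiv_toLp (Fin (n+1)))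
  have hpre : ((MeasurableEquiv.piFinSuccAbove (fun _ : Fin (n+1) => ℝ) 0) ∘
        ((MeasurableEquiv.toLp 2 (Fin (n+1) → ℝ)).symm)) ⁻¹' T
      = {x : EuclideanSpace ℝ (Fin (n+1)) | x 0 ∈ Set.Icc 0 ρ} ∩ closedBall 0 r := by
    ext x
    simp only [Set.mem_preimage, Function.comp_apply, MeasurableEquiv.piFinSuccAbove_apply,
      hT, Set.mem_setOf_eq, Set.mem_inter_iff, mem_closedBall, dist_zero_right]
    rw [EuclideanSpace.norm_eq, Real.sqrt_le_left hr.le, Fin.sum_univ_succ]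
    simp only [MeasurableEquiv.coe_toLp_symm, Fin.insertNthEquiv,
      Equiv.coe_fn_symm_mk, Fin.succAbove_zero, Real.norm_eq_abs, sq_abs,
      Fin.removeNth]
  rw [← hpre, hmp.measure_preimage hTm.nullMeasurableSet]
  rw [show (volume : Measure (ℝ × (Fin n → ℝ))) = (volume : Measure ℝ).prod volume from rfl,
    Measure.prod_apply hTm, ← lintegral_indicator measurableSet_Icc]
  congr 1
  funext t
  by_cases ht : t ∈ Set.Icc 0 ρ
  · rw [Set.indicator_of_mem ht]
    have hslice : Prod.mk t ⁻¹' T = {y : Fin n → ℝ | ∑ i, (y i)^2 ≤ r^2 - t^2} := by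
      ext y
      simp only [hT, Set.mem_preimage, Set.mem_setOf_eq, ht, true_and]
      constructor <;> intro h <;> linarith
    have hball : ((MeasurableEquiv.toLp 2 (Fin n → ℝ)).symm) ⁻¹'
        {y : Fin n → ℝ | ∑ i, (y i)^2 ≤ r^2 - t^2}
        = closedBall (0 : EuclideanSpace ℝ (Fin n)) (Real.sqrt (r^2 - t^2)) := by
      ext x
      simp only [Set.mem_preimage, MeasurableEquiv.coe_toLp_symm, Set.mem_setOf_eq,
        mem_closedBall, dist_zero_right, EuclideanSpace.norm_eq,
        Real.norm_eq_abs, sq_abs]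
      rw [Real.sqrt_le_sqrt_iff]
      · nlinarith [ht.1, ht.2]
    rw [hslice, ← (EuclideanSpace.volume_preserving_symm_measurableEquiv_toLp (Fin n)).measure_preimage,
      hball, Measure.addHaar_closedBall _ _ (Real.sqrt_nonneg _), finrank_euclideanSpace_fin,
      mul_comm]
    · exact (measurableSet_le (by
        exact Finset.measurable_sum _ fun i _ => (measurable_pi_apply i).pow_const 2)
        measurable_const).nullMeasurableSet
  · rw [Set.indicator_of_notMem ht,
      show Prod.mk t ⁻¹' T = (∅ : Set (Fin n → ℝ)) by
        ext y; simp only [hT, Set.mem_preimage, Set.mem_setOf_eq, Set.mem_empty_iff_false]; tauto,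
      measure_empty]

set_option maxHeartbeats 1000000 in
/-- If `X` is uniform on the closed ball of radius `r` in `ℝᵈ` and `0 ≤ ρ ≤ r/√2`,
then the probability that the first coordinate of `X` lies in `[0, ρ]` is between
`(v_{d-1}/v_d) · 2^{-(d-1)/2} · (ρ/r)` and `(v_{d-1}/v_d) · (ρ/r)`. -/
theorem uniform_ball_slice_probability_bounds
    {d : ℕ} (hd : 1 ≤ d) (r ρ : ℝ) (hr : 0 < r)
    (hρ0 : 0 ≤ ρ) (hρ : ρ ≤ r / Real.sqrt 2) :
    let B : Set (EuclideanSpace ℝ (Fin d)) := closedBall 0 r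
    let μ : Measure (EuclideanSpace ℝ (Fin d)) := (volume B)⁻¹ • volume.restrict B
    let S : Set (EuclideanSpace ℝ (Fin d)) :=
      {x | x (⟨0, by omega⟩ : Fin d) ∈ Set.Icc 0 ρ}
    let vd : ℝ := (volume (ball (0 : EuclideanSpace ℝ (Fin d)) 1)).toReal
    let vd1 : ℝ := (volume (ball (0 : EuclideanSpace ℝ (Fin (d - 1))) 1)).toReal
    ENNReal.ofReal (vd1 / vd * 2 ^ (-((d : ℝ) - 1) / 2) * (ρ / r)) ≤ μ S ∧
      μ S ≤ ENNReal.ofReal (vd1 / vd * (ρ / r)) := by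
  obtain ⟨n, rfl⟩ : ∃ n, d = n + 1 := ⟨d - 1, by omega⟩
  intro B μ S vd vd1
  have hs2 : (1:ℝ) ≤ Real.sqrt 2 := by
    rw [show (1:ℝ) = Real.sqrt 1 by simp]; exact Real.sqrt_le_sqrt (by norm_num)
  have hs2' : (0:ℝ) < Real.sqrt 2 := lt_of_lt_of_le one_pos hs2
  have hρr : ρ ≤ r := le_trans hρ (div_le_self hr.le hs2)
  set c : ENNReal := volume (ball (0 : EuclideanSpace ℝ (Fin n)) 1) with hc
  set C : ENNReal := volume (ball (0 : EuclideanSpace ℝ (Fin (n+1))) 1) with hC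
  have hcfin : c ≠ ⊤ := measure_ball_lt_top.ne
  have hCfin : C ≠ ⊤ := measure_ball_lt_top.ne
  have hc0 : c ≠ 0 := (measure_ball_pos _ _ one_pos).ne'
  have hC0 : C ≠ 0 := (measure_ball_pos _ _ one_pos).ne'
  have hvd : vd = C.toReal := rfl
  have hvd1 : vd1 = c.toReal := rfl
  have hvd0 : 0 < vd := ENNReal.toReal_pos hC0 hCfin
  clear_value vd vd1
  have hS : MeasurableSet S := measurableSet_Icc.preimage ((measurable_pi_apply _).comp (MeasurableEquiv.toLp 2 (Fin (n+1) → ℝ)).symm.measurable)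
  have hμS : μ S = (volume B)⁻¹ * volume (S ∩ B) := by
    simp only [μ, Measure.smul_apply, Measure.restrict_apply hS, smul_eq_mul]
  have hVol : volume B = ENNReal.ofReal (r ^ (n+1)) * C := by
    rw [show B = closedBall 0 r from rfl,
      Measure.addHaar_closedBall _ _ hr.le, finrank_euclideanSpace_fin]
  have key : volume (S ∩ B) = ∫⁻ t in Set.Icc 0 ρ,
      c * ENNReal.ofReal (Real.sqrt (r^2 - t^2) ^ n) :=
    slice_volume n r ρ hr hρ0 hρr
  -- helper converting products to a single ofReal
  have hconv : ∀ a : ℝ, (volume B)⁻¹ * (c * ENNReal.ofReal a)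
      = ENNReal.ofReal (vd1 * a / (r ^ (n+1) * vd)) := by
    intro a
    rw [hVol, ENNReal.mul_inv (Or.inr hCfin) (Or.inl ENNReal.ofReal_ne_top),
      ← ENNReal.ofReal_toReal hCfin, ← ENNReal.ofReal_toReal hcfin,
      ← ENNReal.ofReal_inv_of_pos (by positivity),
      ← ENNReal.ofReal_inv_of_pos (ENNReal.toReal_pos hC0 hCfin),
      ← ENNReal.ofReal_mul (by positivity),
      ← ENNReal.ofReal_mul (by positivity),
      ← ENNReal.ofReal_mul (by positivity)]
    congr 1
    rw [hvd1, hvd]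
    field_simp
  -- measurability of the integrand
  have hmeas : Measurable (fun t : ℝ => c * ENNReal.ofReal (Real.sqrt (r^2 - t^2) ^ n)) := by
    apply measurable_const.mul
    apply ENNReal.measurable_ofReal.comp
    exact ((Real.continuous_sqrt.comp (by continuity)).pow n).measurable
  have Ilow : c * ENNReal.ofReal (ρ * (r / Real.sqrt 2)^n) ≤ volume (S ∩ B) := by
    rw [key]
    calc c * ENNReal.ofReal (ρ * (r / Real.sqrt 2)^n)
        = (c * ENNReal.ofReal ((r / Real.sqrt 2)^n)) * volume (Set.Icc (0:ℝ) ρ) := by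
          rw [Real.volume_Icc, sub_zero, ENNReal.ofReal_mul hρ0]; ring
      _ = ∫⁻ _ in Set.Icc (0:ℝ) ρ, c * ENNReal.ofReal ((r / Real.sqrt 2)^n) :=
          (setLIntegral_const _ _).symm
      _ ≤ ∫⁻ t in Set.Icc (0:ℝ) ρ, c * ENNReal.ofReal (Real.sqrt (r^2 - t^2) ^ n) := by
          apply setLIntegral_mono hmeas
          intro t ht
          gcongr
          rw [Real.le_sqrt (by positivity)]
          have h1 : t ≤ r / Real.sqrt 2 := le_trans ht.2 hρ
          have h2 : (Real.sqrt 2)^2 = 2 := Real.sq_sqrt (by norm_num)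
          have h3 : 0 ≤ t := ht.1
          have h4 : (r / Real.sqrt 2)^2 = r^2/2 := by rw [div_pow, h2]
          nlinarith [mul_le_mul h1 h1 h3 (by positivity : (0:ℝ) ≤ r / Real.sqrt 2)]
          nlinarith [ht.1, ht.2, hρr]
  have Iupp : volume (S ∩ B) ≤ c * ENNReal.ofReal (ρ * r^n) := by
    rw [key]
    calc ∫⁻ t in Set.Icc (0:ℝ) ρ, c * ENNReal.ofReal (Real.sqrt (r^2 - t^2) ^ n)
        ≤ ∫⁻ _ in Set.Icc (0:ℝ) ρ, c * ENNReal.ofReal (r^n) := by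
          apply setLIntegral_mono measurable_const
          intro t ht
          gcongr
          calc Real.sqrt (r^2 - t^2) ≤ Real.sqrt (r^2) :=
                Real.sqrt_le_sqrt (by nlinarith [ht.1])
            _ = r := Real.sqrt_sq hr.le
      _ = (c * ENNReal.ofReal (r^n)) * volume (Set.Icc (0:ℝ) ρ) := setLIntegral_const _ _
      _ = c * ENNReal.ofReal (ρ * r^n) := by
          rw [Real.volume_Icc, sub_zero, ENNReal.ofReal_mul hρ0]; ring
  constructor
  · calc ENNReal.ofReal (vd1 / vd * 2 ^ (-((↑(n+1) : ℝ) - 1) / 2) * (ρ / r))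
        = (volume B)⁻¹ * (c * ENNReal.ofReal (ρ * (r / Real.sqrt 2)^n)) := by
          rw [hconv]
          congr 1
          have h2 : (2:ℝ) ^ (-((↑(n+1) : ℝ) - 1) / 2) = ((Real.sqrt 2)⁻¹)^n := by
            have : -((↑(n+1) : ℝ) - 1) / 2 = (-(1/2 : ℝ)) * (n : ℝ) := by push_cast; ring
            rw [this, Real.rpow_mul (by norm_num : (0:ℝ) ≤ 2), Real.rpow_natCast]
            congr 1
            rw [Real.rpow_neg (by norm_num), ← Real.sqrt_eq_rpow]
          rw [h2]
          rw [div_pow]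
          field_simp
          have hsq : Real.sqrt 2 ^ n * (Real.sqrt 2)⁻¹ ^ n = 1 := by
            rw [← mul_pow, mul_inv_cancel₀ hs2'.ne', one_pow]
          linear_combination (vd1 * ρ * r * r ^ n) * hsq
      _ ≤ (volume B)⁻¹ * volume (S ∩ B) := mul_le_mul_right Ilow _
      _ = μ S := hμS.symm
  · calc μ S = (volume B)⁻¹ * volume (S ∩ B) := hμS
      _ ≤ (volume B)⁻¹ * (c * ENNReal.ofReal (ρ * r^n)) := mul_le_mul_right Iupp _
      _ = ENNReal.ofReal (vd1 / vd * (ρ / r)) := by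
          rw [hconv]
          congr 1
          field_simp
          ring
end

section
/- Let G be a graph on a finite sample S ⊂ ℝᵈ with an edge between x and x' iff ‖x - x'‖ ≤ r_c. Suppose A ⊂ ℝᵈ is a connected set and S is a (r_c/4)-covering of A (every point of A is within distance r_c/4 of S). Then any two sample points x, x' ∈ S with dist(x, A) ≤ r_c/4 and dist(x', A) ≤ r_c/4 are connected by a path in G. -/
open Metric

/-- Single-linkage connectivity: if the sample `S` is an `(r_c/4)`-covering of a
connected set `A`, then any two sample points within distance `r_c/4` of `A` are
connected by a path in the graph on `S` joining points at distance at most `r_c`. -/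
theorem single_linkage_graph_connected
    {d : ℕ} (S : Set (EuclideanSpace ℝ (Fin d))) (hSfin : S.Finite)
    (A : Set (EuclideanSpace ℝ (Fin d))) (hA : IsConnected A)
    (rc : ℝ) (hrc : 0 < rc)
    (hcover : ∀ a ∈ A, ∃ s ∈ S, dist a s ≤ rc / 4)
    (x x' : EuclideanSpace ℝ (Fin d)) (hx : x ∈ S) (hx' : x' ∈ S)
    (hxA : Metric.infDist x A ≤ rc / 4) (hx'A : Metric.infDist x' A ≤ rc / 4) :
    Relation.ReflTransGen (fun u v => u ∈ S ∧ v ∈ S ∧ dist u v ≤ rc) x x' := by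
  classical
  obtain ⟨a₀, ha₀A⟩ := hA.nonempty
  set R : EuclideanSpace ℝ (Fin d) → EuclideanSpace ℝ (Fin d) → Prop :=
    fun u v => u ∈ S ∧ v ∈ S ∧ dist u v ≤ rc with hR
  set U : Set (EuclideanSpace ℝ (Fin d)) :=
    {a | a ∈ A ∧ ∃ s ∈ S, dist a s ≤ rc / 4 ∧ Relation.ReflTransGen R x s} with hUdef
  -- stepping lemma: from a point of U we can reach any nearby point of A
  have step : ∀ a ∈ U, ∀ b ∈ A, dist a b < rc / 2 → b ∈ U := by
    rintro a ⟨haA, s, hsS, hs, hpath⟩ b hbA hab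
    obtain ⟨t, htS, ht⟩ := hcover b hbA
    refine ⟨hbA, t, htS, ht, hpath.tail ⟨hsS, htS, ?_⟩⟩
    have h1 : dist s t ≤ dist s a + dist a b + dist b t := dist_triangle4 s a b t
    have h2 : dist s a = dist a s := dist_comm s a
    linarith
  -- U is nonempty
  have hUne : U.Nonempty := by
    have h1 : Metric.infDist x A < rc / 2 := lt_of_le_of_lt hxA (by linarith)
    obtain ⟨a, haA, hax⟩ := (Metric.infDist_lt_iff ⟨a₀, ha₀A⟩).mp h1
    obtain ⟨s, hsS, hs⟩ := hcover a haA
    refine ⟨a, haA, s, hsS, hs, Relation.ReflTransGen.single ⟨hx, hsS, ?_⟩⟩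
    have h2 : dist x s ≤ dist x a + dist a s := dist_triangle x a s
    linarith
  -- A ⊆ U by connectedness
  have hAU : A ⊆ U := by
    by_contra hne
    obtain ⟨b₀, hb₀A, hb₀U⟩ : ∃ b, b ∈ A ∧ b ∉ U := by
      simpa [Set.subset_def] using hne
    set V : Set (EuclideanSpace ℝ (Fin d)) := ⋃ a ∈ U, Metric.ball a (rc / 2) with hVdef
    set W : Set (EuclideanSpace ℝ (Fin d)) := ⋃ b ∈ A \ U, Metric.ball b (rc / 2) with hWdef
    have hVopen : IsOpen V := isOpen_biUnion fun _ _ => Metric.isOpen_ball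
    have hWopen : IsOpen W := isOpen_biUnion fun _ _ => Metric.isOpen_ball
    have hsub : A ⊆ V ∪ W := by
      intro a haA
      by_cases haU : a ∈ U
      · exact Or.inl (Set.mem_biUnion haU (Metric.mem_ball_self (by linarith)))
      · exact Or.inr (Set.mem_biUnion ⟨haA, haU⟩ (Metric.mem_ball_self (by linarith)))
    have hVne : (A ∩ V).Nonempty := by
      obtain ⟨a, haU⟩ := hUne
      exact ⟨a, haU.1, Set.mem_biUnion haU (Metric.mem_ball_self (by linarith))⟩
    have hWne : (A ∩ W).Nonempty :=
      ⟨b₀, hb₀A, Set.mem_biUnion ⟨hb₀A, hb₀U⟩ (Metric.mem_ball_self (by linarith))⟩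
    obtain ⟨c, hcA, hcV, hcW⟩ := hA.isPreconnected V W hVopen hWopen hsub hVne hWne
    obtain ⟨a, haU, hca⟩ := Set.mem_iUnion₂.mp hcV
    obtain ⟨b, hbAU, hcb⟩ := Set.mem_iUnion₂.mp hcW
    have hcU : c ∈ U := step a haU c hcA (by rw [dist_comm]; exact Metric.mem_ball.mp hca)
    have hbU : b ∈ U := step c hcU b hbAU.1 (Metric.mem_ball.mp hcb)
    exact hbAU.2 hbU
  -- finish: find a point of A near x'
  have h1 : Metric.infDist x' A < 3 * rc / 4 := lt_of_le_of_lt hx'A (by linarith)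
  obtain ⟨a, haA, hax'⟩ := (Metric.infDist_lt_iff ⟨a₀, ha₀A⟩).mp h1
  obtain ⟨_, s, hsS, hs, hpath⟩ := hAU haA
  refine hpath.tail ⟨hsS, hx', ?_⟩
  have h2 : dist s x' ≤ dist s a + dist a x' := dist_triangle s a x'
  have h3 : dist s a = dist a s := dist_comm s a
  have h4 : dist a x' = dist x' a := dist_comm a x'
  linarith
end
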